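/- Two-point scaling limit with smooth cutoff in coordinate space: let n ≥ 1, W ∈ L¹(ℝⁿ) (complex-valued), let f : ℝⁿ → ℝ be bounded, measurable with compact support, and continuous almost everywhere, and let Y ∈ ℝⁿ. Then lim_{R→∞} R^{−n} ∫_{ℝⁿ} ∫_{ℝⁿ} W(x₁ − x₂ + R·Y) · f(x₁/R) · f(x₂/R) dx₁ dx₂ = (∫_{ℝⁿ} W(y) dy) · ∫_{ℝⁿ} f(u − Y) f(u) du. -/

import Mathlib

open MeasureTheory Complex Filter Real Topology

set_option maxHeartbeats 1000000 in
/-- Two-point scaling limit with smooth cutoff in coordinate space: for integrable `W` and a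
bounded, compactly supported, a.e. continuous cutoff `f`,
`R^{−n} ∫∫ W(x₁ − x₂ + R·Y) f(x₁/R) f(x₂/R) dx₁ dx₂ → (∫ W) · ∫ f(u − Y) f(u) du`. -/
theorem smooth_cutoff_two_point_limit {n : ℕ} (hn : 1 ≤ n)
    (W : EuclideanSpace ℝ (Fin n) → ℂ)
    (hW : Integrable W (volume : Measure (EuclideanSpace ℝ (Fin n))))
    (f : EuclideanSpace ℝ (Fin n) → ℝ)
    (hfmeas : Measurable f) (C : ℝ) (hfbd : ∀ x, |f x| ≤ C)
    (hfsupp : HasCompactSupport f)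
    (hfcont : ∀ᵐ x ∂(volume : Measure (EuclideanSpace ℝ (Fin n))), ContinuousAt f x)
    (Y : EuclideanSpace ℝ (Fin n)) :
    Tendsto (fun R : ℝ =>
        ((R ^ (-(n : ℝ)) : ℝ) : ℂ) *
          ∫ x₁ : EuclideanSpace ℝ (Fin n), ∫ x₂ : EuclideanSpace ℝ (Fin n),
            W (x₁ - x₂ + R • Y) * ((f (R⁻¹ • x₁) : ℝ) : ℂ) * ((f (R⁻¹ • x₂) : ℝ) : ℂ))
      atTop
      (𝓝 ((∫ y : EuclideanSpace ℝ (Fin n), W y) *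
        ((∫ u : EuclideanSpace ℝ (Fin n), f (u - Y) * f u : ℝ) : ℂ))) := by
  have hC : 0 ≤ C := le_trans (abs_nonneg _) (hfbd 0)
  -- integrability of f
  have hfint : Integrable f (volume : Measure (EuclideanSpace ℝ (Fin n))) := by
    refine Integrable.mono' (g := (tsupport f).indicator fun _ => C) ?_
      hfmeas.aestronglyMeasurable (ae_of_all _ ?_)
    · exact (integrable_indicator_iff (isClosed_tsupport f).measurableSet).2
        (integrableOn_const (IsCompact.measure_lt_top hfsupp).ne)
    · intro x
      by_cases hx : x ∈ tsupport f
      · simpa [Set.indicator_of_mem hx, Real.norm_eq_abs] using hfbd x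
      · simp [Set.indicator_of_notMem hx, image_eq_zero_of_notMem_tsupport hx]
  set L : ℝ := ∫ u : EuclideanSpace ℝ (Fin n), f (u - Y) * f u with hL
  set g : EuclideanSpace ℝ (Fin n) → ℝ :=
    fun v => ∫ u : EuclideanSpace ℝ (Fin n), f (v + u - Y) * f u with hg
  -- measurability of g
  have hgmeas : Measurable g := by
    have h2 : StronglyMeasurable fun p : EuclideanSpace ℝ (Fin n) × EuclideanSpace ℝ (Fin n) =>
        f (p.1 + p.2 - Y) * f p.2 :=
      ((hfmeas.comp ((measurable_fst.add measurable_snd).sub measurable_const)).mul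
        (hfmeas.comp measurable_snd)).stronglyMeasurable
    exact h2.integral_prod_right'.measurable
  -- integrability of the integrand of g
  have hint : ∀ v : EuclideanSpace ℝ (Fin n),
      Integrable (fun u => f (v + u - Y) * f u)
        (volume : Measure (EuclideanSpace ℝ (Fin n))) := by
    intro v
    refine hfint.bdd_mul
      (hfmeas.comp ((measurable_id.const_add v).sub measurable_const)).aestronglyMeasurable
      (c := C) (ae_of_all _ fun u => ?_)
    simpa [Real.norm_eq_abs] using hfbd (v + u - Y)
  -- uniform bound on g
  set Cg : ℝ := C * ∫ u : EuclideanSpace ℝ (Fin n), ‖f u‖ with hCg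
  have hgbd : ∀ v, |g v| ≤ Cg := by
    intro v
    have h1 : ‖g v‖ ≤ ∫ u, ‖f (v + u - Y) * f u‖ := norm_integral_le_integral_norm _
    have h2 : (∫ u, ‖f (v + u - Y) * f u‖) ≤ ∫ u : EuclideanSpace ℝ (Fin n), C * ‖f u‖ := by
      refine integral_mono (hint v).norm (hfint.norm.const_mul C) fun u => ?_
      rw [norm_mul]
      exact mul_le_mul_of_nonneg_right (by simpa [Real.norm_eq_abs] using hfbd (v + u - Y))
        (norm_nonneg _)
    calc |g v| ≤ ∫ u, ‖f (v + u - Y) * f u‖ := h1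
      _ ≤ ∫ u : EuclideanSpace ℝ (Fin n), C * ‖f u‖ := h2
      _ = Cg := by rw [integral_const_mul (L := ℝ)]
  -- a.e. continuity of f at translated points
  have hcontY : ∀ᵐ u : EuclideanSpace ℝ (Fin n) ∂volume, ContinuousAt f (u - Y) :=
    (measurePreserving_sub_right volume Y).quasiMeasurePreserving.ae hfcont
  -- continuity of g at 0 (with value L)
  have hgc : Tendsto g (𝓝 0) (𝓝 L) := by
    rw [tendsto_iff_seq_tendsto]
    intro v hv
    simp only [Function.comp_def, hg, hL]
    refine tendsto_integral_of_dominated_convergence (fun u => C * ‖f u‖)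
      (fun k => (hint (v k)).aestronglyMeasurable) (hfint.norm.const_mul C)
      (fun k => ae_of_all _ fun u => ?_) ?_
    · rw [norm_mul]
      exact mul_le_mul_of_nonneg_right (by simpa [Real.norm_eq_abs] using hfbd (v k + u - Y))
        (norm_nonneg _)
    · filter_upwards [hcontY] with u hu
      have h1 : Tendsto (fun k => v k + u - Y) atTop (𝓝 (u - Y)) := by
        simpa [add_sub_assoc] using hv.add_const (u - Y)
      exact (hu.tendsto.comp h1).mul_const (f u)
  -- the limit of the rescaled integrals
  have hPhi : Tendsto (fun R : ℝ =>
        ∫ y : EuclideanSpace ℝ (Fin n), W y * ((g (R⁻¹ • y) : ℝ) : ℂ)) atTop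
      (𝓝 ((∫ y : EuclideanSpace ℝ (Fin n), W y) * (L : ℂ))) := by
    have hInt : (∫ y : EuclideanSpace ℝ (Fin n), W y * (L : ℂ))
        = (∫ y : EuclideanSpace ℝ (Fin n), W y) * (L : ℂ) := integral_mul_const _ _
    rw [← hInt, tendsto_iff_seq_tendsto]
    intro Rs hRs
    simp only [Function.comp_def]
    refine tendsto_integral_of_dominated_convergence (fun y => ‖W y‖ * Cg)
      (fun k => hW.1.mul (Complex.measurable_ofReal.comp
        (hgmeas.comp (measurable_id.const_smul ((Rs k)⁻¹ : ℝ)))).aestronglyMeasurable)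
      (hW.norm.mul_const Cg) (fun k => ae_of_all _ fun y => ?_) (ae_of_all _ fun y => ?_)
    · rw [norm_mul]
      refine mul_le_mul_of_nonneg_left ?_ (norm_nonneg _)
      simpa [Complex.norm_real, Real.norm_eq_abs] using hgbd ((Rs k)⁻¹ • y)
    · have h0 : Tendsto (fun k => (Rs k)⁻¹ • y) atTop (𝓝 (0 : EuclideanSpace ℝ (Fin n))) := by
        simpa using (tendsto_inv_atTop_zero.comp hRs).smul_const y
      exact ((Complex.continuous_ofReal.tendsto L).comp (hgc.comp h0)).const_mul (W y)
  -- eventual equality of the two expressions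
  have heq : ∀ᶠ R : ℝ in atTop,
      ((R ^ (-(n : ℝ)) : ℝ) : ℂ) *
          (∫ x₁ : EuclideanSpace ℝ (Fin n), ∫ x₂ : EuclideanSpace ℝ (Fin n),
            W (x₁ - x₂ + R • Y) * ((f (R⁻¹ • x₁) : ℝ) : ℂ) * ((f (R⁻¹ • x₂) : ℝ) : ℂ))
        = ∫ y : EuclideanSpace ℝ (Fin n), W y * ((g (R⁻¹ • y) : ℝ) : ℂ) := by
    filter_upwards [eventually_ge_atTop (1 : ℝ)] with R hR
    have hR0 : (0 : ℝ) < R := lt_of_lt_of_le one_pos hR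
    -- the scaling identity
    have hscale : ∀ y : EuclideanSpace ℝ (Fin n),
        (∫ x : EuclideanSpace ℝ (Fin n), f (R⁻¹ • y + R⁻¹ • x - Y) * f (R⁻¹ • x))
          = R ^ n * g (R⁻¹ • y) := by
      intro y
      have h := Measure.integral_comp_inv_smul_of_nonneg
        (volume : Measure (EuclideanSpace ℝ (Fin n)))
        (fun u => f (R⁻¹ • y + u - Y) * f u) hR0.le
      simpa [finrank_euclideanSpace_fin, smul_eq_mul, hg] using h
    -- the compact set K = R • tsupport f
    set K : Set (EuclideanSpace ℝ (Fin n)) :=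
      (fun x : EuclideanSpace ℝ (Fin n) => R • x) '' tsupport f with hK
    have hKcomp : IsCompact K := hfsupp.image (continuous_const_smul R)
    have hKm : MeasurableSet K := hKcomp.isClosed.measurableSet
    have hKfin : volume K < ⊤ := hKcomp.measure_lt_top
    -- the transformed integrand G
    set G : EuclideanSpace ℝ (Fin n) × EuclideanSpace ℝ (Fin n) → ℂ :=
      fun q => W q.1 * ((f (R⁻¹ • (q.1 + q.2 - R • Y)) : ℝ) : ℂ) * ((f (R⁻¹ • q.2) : ℝ) : ℂ)
      with hG
    have hGmeas : AEStronglyMeasurable G (volume.prod volume) := by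
      rw [hG]
      exact ((hW.1.comp_quasiMeasurePreserving Measure.quasiMeasurePreserving_fst).mul
        (Complex.measurable_ofReal.comp (hfmeas.comp
          (((measurable_fst.add measurable_snd).sub measurable_const).const_smul
            (R⁻¹ : ℝ)))).aestronglyMeasurable).mul
        (Complex.measurable_ofReal.comp
          (hfmeas.comp (measurable_snd.const_smul (R⁻¹ : ℝ)))).aestronglyMeasurable
    have hGint : Integrable G (volume.prod volume) := by
      have hφ : Integrable (fun q : EuclideanSpace ℝ (Fin n) × EuclideanSpace ℝ (Fin n) =>
          ‖W q.1‖ * K.indicator (fun _ => C * C) q.2) (volume.prod volume) :=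
        hW.norm.mul_prod ((integrable_indicator_iff hKm).2
          (integrableOn_const hKfin.ne))
      refine hφ.mono' hGmeas (ae_of_all _ fun q => ?_)
      by_cases hq : f (R⁻¹ • q.2) = 0
      · simp only [hG, hq, Complex.ofReal_zero, mul_zero, norm_zero]
        exact mul_nonneg (norm_nonneg _)
          (Set.indicator_nonneg (fun _ _ => mul_nonneg hC hC) _)
      · have hmem : q.2 ∈ K := by
          refine ⟨R⁻¹ • q.2, subset_tsupport f hq, ?_⟩
          show R • R⁻¹ • q.2 = q.2
          rw [smul_smul, mul_inv_cancel₀ (ne_of_gt hR0), one_smul]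
        rw [Set.indicator_of_mem hmem]
        have hnorm : ‖G q‖ = ‖W q.1‖ * (|f (R⁻¹ • (q.1 + q.2 - R • Y))| * |f (R⁻¹ • q.2)|) := by
          simp [hG, norm_mul, Complex.norm_real, Real.norm_eq_abs, mul_assoc]
        rw [hnorm]
        exact mul_le_mul_of_nonneg_left
          (mul_le_mul (hfbd _) (hfbd _) (abs_nonneg _) hC) (norm_nonneg _)
    -- the measure-preserving shear map
    have hT : MeasurePreserving
        (fun p : EuclideanSpace ℝ (Fin n) × EuclideanSpace ℝ (Fin n) =>
          (p.1 - p.2 + R • Y, p.2)) (volume.prod volume) (volume.prod volume) := by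
      have hT1 : MeasurePreserving
          (fun p : EuclideanSpace ℝ (Fin n) × EuclideanSpace ℝ (Fin n) => (p.1 - p.2, p.2))
          (volume.prod volume) (volume.prod volume) := measurePreserving_sub_prod volume volume
      have hT2 : MeasurePreserving
          (fun q : EuclideanSpace ℝ (Fin n) × EuclideanSpace ℝ (Fin n) => (q.1 + R • Y, q.2))
          (volume.prod volume) (volume.prod volume) :=
        (measurePreserving_add_right volume (R • Y)).prod (MeasurePreserving.id volume)
      exact hT2.comp hT1
    -- the shear map as a measurable equivalence
    let Tme : (EuclideanSpace ℝ (Fin n) × EuclideanSpace ℝ (Fin n)) ≃ᵐ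
        (EuclideanSpace ℝ (Fin n) × EuclideanSpace ℝ (Fin n)) :=
      { toFun := fun p => (p.1 - p.2 + R • Y, p.2)
        invFun := fun q => (q.1 + q.2 - R • Y, q.2)
        left_inv := fun p => by
          obtain ⟨a, b⟩ := p; simp only [Prod.mk.injEq, and_true]; abel
        right_inv := fun q => by
          obtain ⟨a, b⟩ := q; simp only [Prod.mk.injEq, and_true]; abel
        measurable_toFun :=
          ((measurable_fst.sub measurable_snd).add_const _).prodMk measurable_snd
        measurable_invFun :=
          ((measurable_fst.add measurable_snd).sub_const _).prodMk measurable_snd }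
    have hTemb : MeasurableEmbedding
        (fun p : EuclideanSpace ℝ (Fin n) × EuclideanSpace ℝ (Fin n) =>
          (p.1 - p.2 + R • Y, p.2)) := Tme.measurableEmbedding
    -- the pointwise identity between the original integrand and G ∘ T
    have hfun : ∀ p : EuclideanSpace ℝ (Fin n) × EuclideanSpace ℝ (Fin n),
        G (p.1 - p.2 + R • Y, p.2)
          = W (p.1 - p.2 + R • Y) * ((f (R⁻¹ • p.1) : ℝ) : ℂ) * ((f (R⁻¹ • p.2) : ℝ) : ℂ) := by
      intro p
      have harg : p.1 - p.2 + R • Y + p.2 - R • Y = p.1 := by abel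
      simp only [hG]
      rw [harg]
    have hHint : Integrable
        (fun p : EuclideanSpace ℝ (Fin n) × EuclideanSpace ℝ (Fin n) =>
          W (p.1 - p.2 + R • Y) * ((f (R⁻¹ • p.1) : ℝ) : ℂ) * ((f (R⁻¹ • p.2) : ℝ) : ℂ))
        (volume.prod volume) := by
      have h2 : Integrable (G ∘ fun p : EuclideanSpace ℝ (Fin n) × EuclideanSpace ℝ (Fin n) =>
          (p.1 - p.2 + R • Y, p.2)) (volume.prod volume) :=
        (hT.integrable_comp_emb hTemb).2 hGint
      exact h2.congr (ae_of_all _ fun p => hfun p)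
    -- the computation of the double integral
    have hDD : (∫ x₁ : EuclideanSpace ℝ (Fin n), ∫ x₂ : EuclideanSpace ℝ (Fin n),
          W (x₁ - x₂ + R • Y) * ((f (R⁻¹ • x₁) : ℝ) : ℂ) * ((f (R⁻¹ • x₂) : ℝ) : ℂ))
        = ∫ y : EuclideanSpace ℝ (Fin n), W y * ((R ^ n * g (R⁻¹ • y) : ℝ) : ℂ) := by
      calc (∫ x₁ : EuclideanSpace ℝ (Fin n), ∫ x₂ : EuclideanSpace ℝ (Fin n),
            W (x₁ - x₂ + R • Y) * ((f (R⁻¹ • x₁) : ℝ) : ℂ) * ((f (R⁻¹ • x₂) : ℝ) : ℂ))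
          = ∫ p : EuclideanSpace ℝ (Fin n) × EuclideanSpace ℝ (Fin n),
              W (p.1 - p.2 + R • Y) * ((f (R⁻¹ • p.1) : ℝ) : ℂ) * ((f (R⁻¹ • p.2) : ℝ) : ℂ)
              ∂(volume.prod volume) := MeasureTheory.integral_integral hHint
        _ = ∫ q, G q ∂(volume.prod volume) := by
            rw [← hT.integral_comp hTemb G]
            exact integral_congr_ae (ae_of_all _ fun p => (hfun p).symm)
        _ = ∫ q₁ : EuclideanSpace ℝ (Fin n), ∫ q₂ : EuclideanSpace ℝ (Fin n), G (q₁, q₂) := by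
            exact (MeasureTheory.integral_integral
              (f := fun q₁ q₂ => G (q₁, q₂)) hGint).symm
        _ = ∫ y : EuclideanSpace ℝ (Fin n), W y * ((R ^ n * g (R⁻¹ • y) : ℝ) : ℂ) := by
            refine integral_congr_ae (ae_of_all _ fun y => ?_)
            simp only [hG]
            have harg : ∀ x : EuclideanSpace ℝ (Fin n),
                R⁻¹ • (y + x - R • Y) = R⁻¹ • y + R⁻¹ • x - Y := by
              intro x
              rw [smul_sub, smul_add, smul_smul, inv_mul_cancel₀ (ne_of_gt hR0), one_smul]
            simp_rw [harg, mul_assoc, ← Complex.ofReal_mul]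
            rw [integral_const_mul]
            have hIC : (∫ x : EuclideanSpace ℝ (Fin n),
                ((f (R⁻¹ • y + R⁻¹ • x - Y) * f (R⁻¹ • x) : ℝ) : ℂ))
                = ((∫ x : EuclideanSpace ℝ (Fin n),
                    f (R⁻¹ • y + R⁻¹ • x - Y) * f (R⁻¹ • x) : ℝ) : ℂ) := integral_ofReal
            rw [hIC, hscale y]
    rw [hDD]
    have hrw : ∀ y : EuclideanSpace ℝ (Fin n),
        W y * ((R ^ n * g (R⁻¹ • y) : ℝ) : ℂ)
          = ((R ^ n : ℝ) : ℂ) * (W y * ((g (R⁻¹ • y) : ℝ) : ℂ)) := by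
      intro y; push_cast; ring
    simp_rw [hrw]
    rw [integral_const_mul, ← mul_assoc, ← Complex.ofReal_mul]
    have hone : (R : ℝ) ^ (-(n : ℝ)) * R ^ n = 1 := by
      rw [Real.rpow_neg hR0.le, Real.rpow_natCast]
      exact inv_mul_cancel₀ (pow_ne_zero _ hR0.ne')
    rw [hone, Complex.ofReal_one, one_mul]
  exact Tendsto.congr' (heq.mono fun R h => h.symm) hPhi
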